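/- Fix N, p ≥ 1 and β ∈ ℝ. With F(λ) the quenched pressure Σ_k e^{−λ}λ^k/k! N^{−pk} Σ_i ln Z(k,i), for every λ > 0 one has the absolutely convergent series representation F′(λ) = ln cosh β − Σ_{n=1}^∞ ((−1)^n/n) (tanh β)^n ⟨q_{1…n}^p⟩_λ, where ⟨q_{1…n}^p⟩_λ = Σ_k e^{−λ}λ^k/k! N^{−pk} Σ_i Ω_{k,i}( (N^{−1} Σ_{r=1}^N σ^1_r⋯σ^n_r)^p ) and Ω_{k,i} is the n-fold product of the Gibbs state ω_{k,i}. (This is the paper's exact formula for d/dα A(α,β) expressed via the multi-overlaps, before taking the thermodynamic limit.) -/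

import Mathlib

/-- Spin value (±1) of a Boolean; configurations on N sites are `Fin N → Bool`. -/
noncomputable def spin (b : Bool) : ℝ := if b then 1 else -1

/-- Partition function of the diluted p-spin Hamiltonian with k interaction terms. -/
noncomputable def Zdil (N p : ℕ) (β : ℝ) (k : ℕ) (i : Fin k → Fin p → Fin N) : ℝ :=
  ∑ σ : Fin N → Bool, Real.exp (β * ∑ ν : Fin k, ∏ l : Fin p, spin (σ (i ν l)))

/-- n-fold replicated (product) Gibbs average, the replicas sharing the disorder. -/
noncomputable def replicated (N p : ℕ) (β : ℝ) (k : ℕ) (i : Fin k → Fin p → Fin N)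
    (n : ℕ) (g : (Fin n → (Fin N → Bool)) → ℝ) : ℝ :=
  (∑ σs : Fin n → (Fin N → Bool),
      g σs * ∏ a : Fin n,
        Real.exp (β * ∑ ν : Fin k, ∏ l : Fin p, spin (σs a (i ν l))))
    / (Zdil N p β k i) ^ n

/-- Quenched expectation at Poisson mean λ. -/
noncomputable def quenched (N p : ℕ) (lam : ℝ)
    (f : (k : ℕ) → (Fin k → Fin p → Fin N) → ℝ) : ℝ :=
  ∑' k : ℕ, Real.exp (-lam) * lam ^ k / (Nat.factorial k : ℝ) *
    ((1 / (N : ℝ) ^ (p * k)) * ∑ i : Fin k → Fin p → Fin N, f k i)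

/-- Quenched average ⟨q_{1…n}^p⟩ of the p-th power of the n-replica multi-overlap. -/
noncomputable def overlapAvg (N p : ℕ) (β : ℝ) (lam : ℝ) (n : ℕ) : ℝ :=
  quenched N p lam (fun k i => replicated N p β k i n
    (fun σs => ((1 / (N : ℝ)) * ∑ r : Fin N, ∏ a : Fin n, spin (σs a r)) ^ p))

namespace DilPspin

variable (N p : ℕ) (β : ℝ)

/-- Boltzmann weight. -/
noncomputable def W (k : ℕ) (i : Fin k → Fin p → Fin N) (σ : Fin N → Bool) : ℝ :=
  Real.exp (β * ∑ ν : Fin k, ∏ l : Fin p, spin (σ (i ν l)))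

lemma W_pos (k : ℕ) (i : Fin k → Fin p → Fin N) (σ : Fin N → Bool) : 0 < W N p β k i σ :=
  Real.exp_pos _

lemma Zdil_eq (k : ℕ) (i : Fin k → Fin p → Fin N) :
    Zdil N p β k i = ∑ σ : Fin N → Bool, W N p β k i σ := rfl

lemma Zdil_pos (k : ℕ) (i : Fin k → Fin p → Fin N) : 0 < Zdil N p β k i := by
  rw [Zdil_eq]
  exact Finset.sum_pos (fun σ _ => W_pos N p β k i σ) ⟨fun _ => true, Finset.mem_univ _⟩

lemma spin_eq_or (b : Bool) : spin b = 1 ∨ spin b = -1 := by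
  cases b <;> simp [spin]

lemma abs_spin (b : Bool) : |spin b| = 1 := by cases b <;> simp [spin]

lemma spin_mul_self (b : Bool) : spin b * spin b = 1 := by cases b <;> simp [spin]

lemma prod_spin_eq_or {α : Type*} [Fintype α] (f : α → Bool) :
    (∏ a : α, spin (f a)) = 1 ∨ (∏ a : α, spin (f a)) = -1 := by
  rw [← mul_self_eq_one_iff, ← Finset.prod_mul_distrib]
  simp [spin_mul_self]

lemma abs_tanh_lt_one (x : ℝ) : |Real.tanh x| < 1 := by
  have hc : 0 < Real.cosh x := Real.cosh_pos x
  have h2 : Real.cosh x ^ 2 = Real.sinh x ^ 2 + 1 := by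
    rw [Real.cosh_sq]
  rw [Real.tanh_eq_sinh_div_cosh, abs_div, abs_of_pos hc, div_lt_one hc, abs_lt]
  constructor <;> nlinarith [abs_nonneg (Real.sinh x), sq_abs (Real.sinh x)]

/-- exp(β·s) = cosh β (1 + tanh β · s) for s = ±1. -/
lemma exp_spin (s : ℝ) (hs : s = 1 ∨ s = -1) :
    Real.exp (β * s) = Real.cosh β * (1 + Real.tanh β * s) := by
  have hc : Real.cosh β ≠ 0 := ne_of_gt (Real.cosh_pos β)
  rcases hs with h | h <;> subst h
  · rw [mul_one, Real.tanh_eq_sinh_div_cosh, ← Real.cosh_add_sinh β]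
    field_simp
  · rw [Real.tanh_eq_sinh_div_cosh, mul_neg_one]
    have : Real.cosh β * (1 + Real.sinh β / Real.cosh β * -1) = Real.cosh β - Real.sinh β := by
      field_simp
      ring
    rw [this, Real.cosh_sub_sinh]

end DilPspin

namespace DilPspin
variable (N p : ℕ) (β : ℝ)

/-- Gibbs average of `g`. -/
noncomputable def gw (k : ℕ) (i : Fin k → Fin p → Fin N) (g : (Fin N → Bool) → ℝ) : ℝ :=
  (∑ σ : Fin N → Bool, g σ * W N p β k i σ) / Zdil N p β k i

lemma abs_gw_le_one (k : ℕ) (i : Fin k → Fin p → Fin N) (g : (Fin N → Bool) → ℝ)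
    (hg : ∀ σ, |g σ| ≤ 1) : |gw N p β k i g| ≤ 1 := by
  have hZ := Zdil_pos N p β k i
  rw [gw, abs_div, abs_of_pos hZ, div_le_one hZ]
  calc |∑ σ : Fin N → Bool, g σ * W N p β k i σ|
      ≤ ∑ σ : Fin N → Bool, |g σ * W N p β k i σ| := Finset.abs_sum_le_sum_abs _ _
    _ ≤ ∑ σ : Fin N → Bool, W N p β k i σ := by
        apply Finset.sum_le_sum
        intro σ _
        rw [abs_mul, abs_of_pos (W_pos N p β k i σ)]
        calc |g σ| * W N p β k i σ ≤ 1 * W N p β k i σ :=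
              mul_le_mul_of_nonneg_right (hg σ) (le_of_lt (W_pos N p β k i σ))
          _ = W N p β k i σ := one_mul _
    _ = Zdil N p β k i := (Zdil_eq N p β k i).symm

/-- One-term interaction function s_j(σ) = ∏_l spin (σ (j l)). -/
noncomputable def sj (j : Fin p → Fin N) (σ : Fin N → Bool) : ℝ := ∏ l : Fin p, spin (σ (j l))

lemma sj_eq_or (j : Fin p → Fin N) (σ : Fin N → Bool) : sj N p j σ = 1 ∨ sj N p j σ = -1 :=
  prod_spin_eq_or _

lemma abs_sj_le_one (j : Fin p → Fin N) (σ : Fin N → Bool) : |sj N p j σ| ≤ 1 := by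
  rcases sj_eq_or N p j σ with h | h <;> rw [h] <;> norm_num

/-- The cavity step: adding one interaction term. -/
lemma Zdil_snoc (k : ℕ) (i : Fin k → Fin p → Fin N) (j : Fin p → Fin N) :
    Zdil N p β (k + 1) (Fin.snoc i j) =
      Real.cosh β * Zdil N p β k i * (1 + Real.tanh β * gw N p β k i (sj N p j)) := by
  have hZ := (Zdil_pos N p β k i).ne'
  rw [Zdil_eq, Zdil_eq]
  have key : ∀ σ : Fin N → Bool, W N p β (k+1) (Fin.snoc i j) σ =
      Real.cosh β * (W N p β k i σ + Real.tanh β * (sj N p j σ * W N p β k i σ)) := by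
    intro σ
    rw [W, W, Fin.sum_univ_castSucc]
    simp only [Fin.snoc_castSucc, Fin.snoc_last]
    rw [mul_add, Real.exp_add, exp_spin β _ (prod_spin_eq_or _), ← sj]
    ring
  rw [Finset.sum_congr rfl (fun σ _ => key σ), ← Finset.mul_sum]
  have : ∑ σ : Fin N → Bool, (W N p β k i σ + Real.tanh β * (sj N p j σ * W N p β k i σ))
      = Zdil N p β k i + Real.tanh β * (gw N p β k i (sj N p j) * Zdil N p β k i) := by
    rw [Finset.sum_add_distrib, ← Finset.mul_sum, gw, div_mul_cancel₀ _ hZ, Zdil_eq]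
  rw [this, Zdil_eq N p β k i]
  ring

end DilPspin

namespace DilPspin
variable (N p : ℕ) (β : ℝ)

lemma abs_tanh_gw_lt_one (k : ℕ) (i : Fin k → Fin p → Fin N) (g : (Fin N → Bool) → ℝ)
    (hg : ∀ σ, |g σ| ≤ 1) : |Real.tanh β * gw N p β k i g| < 1 := by
  rw [abs_mul]
  calc |Real.tanh β| * |gw N p β k i g| ≤ |Real.tanh β| * 1 :=
        mul_le_mul_of_nonneg_left (abs_gw_le_one N p β k i g hg) (abs_nonneg _)
    _ = |Real.tanh β| := mul_one _
    _ < 1 := abs_tanh_lt_one β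

lemma one_add_tanh_gw_pos (k : ℕ) (i : Fin k → Fin p → Fin N) (g : (Fin N → Bool) → ℝ)
    (hg : ∀ σ, |g σ| ≤ 1) : 0 < 1 + Real.tanh β * gw N p β k i g := by
  have := abs_lt.mp (abs_tanh_gw_lt_one N p β k i g hg)
  linarith [this.1]

lemma log_Zdil_snoc (k : ℕ) (i : Fin k → Fin p → Fin N) (j : Fin p → Fin N) :
    Real.log (Zdil N p β (k + 1) (Fin.snoc i j)) =
      Real.log (Real.cosh β) + Real.log (Zdil N p β k i)
        + Real.log (1 + Real.tanh β * gw N p β k i (sj N p j)) := by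
  rw [Zdil_snoc,
      Real.log_mul (mul_pos (Real.cosh_pos β) (Zdil_pos N p β k i)).ne'
        (one_add_tanh_gw_pos N p β k i (sj N p j) (abs_sj_le_one N p j)).ne',
      Real.log_mul (Real.cosh_pos β).ne' (Zdil_pos N p β k i).ne']

/-- Powers of the Gibbs average are replicated averages. -/
lemma gw_pow (k : ℕ) (i : Fin k → Fin p → Fin N) (g : (Fin N → Bool) → ℝ) (m : ℕ) :
    gw N p β k i g ^ m = replicated N p β k i m (fun σs => ∏ a : Fin m, g (σs a)) := by
  rw [gw, replicated, div_pow]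
  congr 1
  have := Finset.prod_univ_sum (fun _ : Fin m => (Finset.univ : Finset (Fin N → Bool)))
    (fun _ σ => g σ * W N p β k i σ)
  rw [Finset.prod_const, Finset.card_univ, Fintype.card_fin] at this
  rw [this, Fintype.piFinset_univ]
  apply Finset.sum_congr rfl
  intro σs _
  rw [Finset.prod_mul_distrib]
  rfl

/-- Averaging the m-th power of the Gibbs average over the new interaction sites
gives the replicated average of the p-th power of the multi-overlap. -/
lemma avg_gw_pow (k : ℕ) (i : Fin k → Fin p → Fin N) (m : ℕ) :
    (1 / (N : ℝ) ^ p) * ∑ j : Fin p → Fin N, gw N p β k i (sj N p j) ^ m =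
      replicated N p β k i m
        (fun σs => ((1 / (N : ℝ)) * ∑ r : Fin N, ∏ a : Fin m, spin (σs a r)) ^ p) := by
  have ht : ∀ σs : Fin m → (Fin N → Bool),
      (∑ j : Fin p → Fin N, ∏ a : Fin m, sj N p (j) (σs a))
        = (∑ r : Fin N, ∏ a : Fin m, spin (σs a r)) ^ p := by
    intro σs
    have h1 : ∀ j : Fin p → Fin N, (∏ a : Fin m, sj N p j (σs a))
        = ∏ l : Fin p, ∏ a : Fin m, spin (σs a (j l)) := by
      intro j
      simp only [sj]
      rw [Finset.prod_comm]
    simp only [h1]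
    have h2 := Finset.prod_univ_sum (fun _ : Fin p => (Finset.univ : Finset (Fin N)))
      (fun _ r => ∏ a : Fin m, spin (σs a r))
    rw [Fintype.piFinset_univ] at h2
    rw [← h2, Finset.prod_const, Finset.card_univ, Fintype.card_fin]
  simp only [gw_pow, replicated]
  rw [← Finset.sum_div, Finset.sum_comm]
  have step : ∀ σs : Fin m → (Fin N → Bool),
      (∑ j : Fin p → Fin N, (∏ a : Fin m, sj N p j (σs a)) *
          ∏ a : Fin m, Real.exp (β * ∑ ν : Fin k, ∏ l : Fin p, spin (σs a (i ν l))))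
        = ((∑ r : Fin N, ∏ a : Fin m, spin (σs a r)) ^ p) *
          ∏ a : Fin m, Real.exp (β * ∑ ν : Fin k, ∏ l : Fin p, spin (σs a (i ν l))) := by
    intro σs
    rw [← Finset.sum_mul, ht σs]
  rw [Finset.sum_congr rfl (fun σs _ => step σs), ← mul_div_assoc, Finset.mul_sum]
  congr 1
  apply Finset.sum_congr rfl
  intro σs _
  rw [mul_pow, div_pow, one_pow]
  ring

end DilPspin

namespace DilPspin
variable (N p : ℕ) (β : ℝ)

lemma hasSum_log_one_add {y : ℝ} (hy : |y| < 1) :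
    HasSum (fun n : ℕ => (-1 : ℝ) ^ n * y ^ (n + 1) / (n + 1)) (Real.log (1 + y)) := by
  have h := (Real.hasSum_pow_div_log_of_abs_lt_one (x := -y) (by rwa [abs_neg])).neg
  rw [sub_neg_eq_add, neg_neg] at h
  have e : (fun n : ℕ => -((-y) ^ (n + 1) / ((n : ℝ) + 1)))
      = fun n : ℕ => (-1 : ℝ) ^ n * y ^ (n + 1) / (n + 1) := by
    funext n
    rw [neg_pow]
    ring
  exact e ▸ h

/-- The multi-overlap observable. -/
noncomputable def ovl (n : ℕ) (σs : Fin n → (Fin N → Bool)) : ℝ :=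
  ((1 / (N : ℝ)) * ∑ r : Fin N, ∏ a : Fin n, spin (σs a r)) ^ p

lemma hasSum_overlap (k : ℕ) (i : Fin k → Fin p → Fin N) :
    HasSum (fun n : ℕ => (-1 : ℝ) ^ n * Real.tanh β ^ (n + 1) / (n + 1) *
        replicated N p β k i (n + 1) (ovl N p (n + 1)))
      ((1 / (N : ℝ) ^ p) * ∑ j : Fin p → Fin N,
        Real.log (1 + Real.tanh β * gw N p β k i (sj N p j))) := by
  have hj : ∀ j : Fin p → Fin N,
      HasSum (fun n : ℕ => (-1 : ℝ) ^ n * (Real.tanh β * gw N p β k i (sj N p j)) ^ (n + 1) / (n + 1))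
        (Real.log (1 + Real.tanh β * gw N p β k i (sj N p j))) := fun j =>
    hasSum_log_one_add (abs_tanh_gw_lt_one N p β k i (sj N p j) (abs_sj_le_one N p j))
  have H := (hasSum_sum (fun j (_ : j ∈ (Finset.univ : Finset (Fin p → Fin N))) => hj j)).mul_left
    (1 / (N : ℝ) ^ p)
  have key : (fun n : ℕ => (1 / (N : ℝ) ^ p) * ∑ j : Fin p → Fin N,
        (-1 : ℝ) ^ n * (Real.tanh β * gw N p β k i (sj N p j)) ^ (n + 1) / (n + 1))
      = fun n : ℕ => (-1 : ℝ) ^ n * Real.tanh β ^ (n + 1) / (n + 1) *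
        replicated N p β k i (n + 1) (ovl N p (n + 1)) := by
    funext n
    have e1 : ∀ j : Fin p → Fin N,
        (-1 : ℝ) ^ n * (Real.tanh β * gw N p β k i (sj N p j)) ^ (n + 1) / (n + 1)
          = ((-1 : ℝ) ^ n * Real.tanh β ^ (n + 1) / (n + 1)) * gw N p β k i (sj N p j) ^ (n + 1) := by
      intro j
      rw [mul_pow]
      ring
    rw [Finset.sum_congr rfl (fun j _ => e1 j), ← Finset.mul_sum, ← mul_assoc,
      mul_comm (1 / (N : ℝ) ^ p), mul_assoc, avg_gw_pow]
    rfl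
  exact key ▸ H

/-- The partition function to the n-th power as a sum over replicas. -/
lemma Zdil_pow (k : ℕ) (i : Fin k → Fin p → Fin N) (n : ℕ) :
    Zdil N p β k i ^ n = ∑ σs : Fin n → (Fin N → Bool), ∏ a : Fin n, W N p β k i (σs a) := by
  rw [Zdil_eq]
  have := Finset.prod_univ_sum (fun _ : Fin n => (Finset.univ : Finset (Fin N → Bool)))
    (fun _ σ => W N p β k i σ)
  rw [Finset.prod_const, Finset.card_univ, Fintype.card_fin] at this
  rw [this, Fintype.piFinset_univ]

lemma abs_replicated_le_one (k : ℕ) (i : Fin k → Fin p → Fin N) (n : ℕ)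
    (g : (Fin n → (Fin N → Bool)) → ℝ) (hg : ∀ σs, |g σs| ≤ 1) :
    |replicated N p β k i n g| ≤ 1 := by
  have hZ : (0 : ℝ) < Zdil N p β k i ^ n := pow_pos (Zdil_pos N p β k i) n
  rw [replicated, abs_div, abs_of_pos hZ, div_le_one hZ]
  have hW : ∀ σs : Fin n → (Fin N → Bool), (0 : ℝ) < ∏ a : Fin n, W N p β k i (σs a) :=
    fun σs => Finset.prod_pos fun a _ => W_pos N p β k i (σs a)
  calc |∑ σs : Fin n → (Fin N → Bool), g σs * ∏ a : Fin n,
          Real.exp (β * ∑ ν : Fin k, ∏ l : Fin p, spin (σs a (i ν l)))|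
      ≤ ∑ σs : Fin n → (Fin N → Bool), |g σs * ∏ a : Fin n, W N p β k i (σs a)| :=
        Finset.abs_sum_le_sum_abs _ _
    _ ≤ ∑ σs : Fin n → (Fin N → Bool), ∏ a : Fin n, W N p β k i (σs a) := by
        apply Finset.sum_le_sum
        intro σs _
        rw [abs_mul, abs_of_pos (hW σs)]
        calc |g σs| * (∏ a : Fin n, W N p β k i (σs a))
            ≤ 1 * ∏ a : Fin n, W N p β k i (σs a) :=
              mul_le_mul_of_nonneg_right (hg σs) (hW σs).le
          _ = _ := one_mul _
    _ = Zdil N p β k i ^ n := (Zdil_pow N p β k i n).symm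

lemma abs_ovl_le_one (hN : 1 ≤ N) (n : ℕ) (σs : Fin n → (Fin N → Bool)) :
    |ovl N p n σs| ≤ 1 := by
  have hN0 : (0 : ℝ) < (N : ℝ) := by exact_mod_cast Nat.pos_of_ne_zero (by omega)
  rw [ovl, abs_pow]
  refine pow_le_one₀ (abs_nonneg _) ?_
  rw [abs_mul, abs_of_pos (by positivity : (0:ℝ) < 1 / (N:ℝ))]
  calc (1 / (N : ℝ)) * |∑ r : Fin N, ∏ a : Fin n, spin (σs a r)|
      ≤ (1 / (N : ℝ)) * (N : ℝ) := by
        refine mul_le_mul_of_nonneg_left ?_ (by positivity)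
        calc |∑ r : Fin N, ∏ a : Fin n, spin (σs a r)|
            ≤ ∑ r : Fin N, |∏ a : Fin n, spin (σs a r)| := Finset.abs_sum_le_sum_abs _ _
          _ = ∑ r : Fin N, (1 : ℝ) := by
              refine Finset.sum_congr rfl fun r _ => ?_
              rw [Finset.abs_prod]
              simp [abs_spin]
          _ = (N : ℝ) := by simp
    _ = 1 := by field_simp

end DilPspin

namespace DilPspin
variable (N p : ℕ) (β : ℝ)

/-- The disorder-averaged log partition function at fixed k. -/
noncomputable def ck (k : ℕ) : ℝ :=
  (1 / (N : ℝ) ^ (p * k)) * ∑ i : Fin k → Fin p → Fin N, Real.log (Zdil N p β k i)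

/-- The disorder-averaged log(1 + θω) correction at fixed k. -/
noncomputable def Lk (k : ℕ) : ℝ :=
  (1 / (N : ℝ) ^ (p * k)) * ∑ i : Fin k → Fin p → Fin N,
    (1 / (N : ℝ) ^ p) * ∑ j : Fin p → Fin N,
      Real.log (1 + Real.tanh β * gw N p β k i (sj N p j))

lemma card_disorder (k : ℕ) :
    (Fintype.card (Fin k → Fin p → Fin N) : ℝ) = (N : ℝ) ^ (p * k) := by
  rw [Fintype.card_fun, Fintype.card_fun, Fintype.card_fin, Fintype.card_fin, Fintype.card_fin]
  push_cast
  rw [← pow_mul]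

lemma ck_succ (hN : 1 ≤ N) (k : ℕ) :
    ck N p β (k + 1) = Real.log (Real.cosh β) + ck N p β k + Lk N p β k := by
  have hN0 : (0 : ℝ) < (N : ℝ) := by exact_mod_cast Nat.pos_of_ne_zero (by omega)
  have hsum : ∑ i' : Fin (k + 1) → Fin p → Fin N, Real.log (Zdil N p β (k + 1) i')
      = ∑ x : (Fin p → Fin N) × (Fin k → Fin p → Fin N),
          Real.log (Zdil N p β (k + 1) (Fin.snoc x.2 x.1)) := by
    refine (Fintype.sum_equiv (Fin.snocEquiv (fun _ => Fin p → Fin N)) _ _ fun x => ?_).symm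
    congr 1
  rw [ck, hsum, Fintype.sum_prod_type]
  have step : ∀ (j : Fin p → Fin N),
      ∑ i : Fin k → Fin p → Fin N, Real.log (Zdil N p β (k + 1) (Fin.snoc i j))
        = (N : ℝ) ^ (p * k) * Real.log (Real.cosh β)
          + (∑ i : Fin k → Fin p → Fin N, Real.log (Zdil N p β k i))
          + ∑ i : Fin k → Fin p → Fin N,
              Real.log (1 + Real.tanh β * gw N p β k i (sj N p j)) := by
    intro j
    rw [Finset.sum_congr rfl (fun i _ => log_Zdil_snoc N p β k i j), Finset.sum_add_distrib,
      Finset.sum_add_distrib, Finset.sum_const, Finset.card_univ, nsmul_eq_mul, card_disorder]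
  rw [Finset.sum_congr rfl (fun j _ => step j), Finset.sum_add_distrib, Finset.sum_add_distrib,
    Finset.sum_const, Finset.sum_const, Finset.card_univ]
  have hcardj : (Fintype.card (Fin p → Fin N) : ℝ) = (N : ℝ) ^ p := by
    rw [Fintype.card_fun, Fintype.card_fin, Fintype.card_fin]; push_cast; ring
  have hpow : (N : ℝ) ^ (p * (k + 1)) = (N : ℝ) ^ (p * k) * (N : ℝ) ^ p := by
    rw [← pow_add]; ring_nf
  rw [ck, Lk, hpow, nsmul_eq_mul, nsmul_eq_mul, hcardj, Finset.sum_comm]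
  simp only [← Finset.mul_sum]
  have h1 : ((N : ℝ) ^ (p * k)) ≠ 0 := by positivity
  have h2 : ((N : ℝ) ^ p) ≠ 0 := by positivity
  field_simp

end DilPspin

namespace DilPspin
variable (N p : ℕ) (β : ℝ)

/-- Disorder-averaged replicated overlap at fixed k. -/
noncomputable def Rq (k n : ℕ) : ℝ :=
  (1 / (N : ℝ) ^ (p * k)) * ∑ i : Fin k → Fin p → Fin N,
    replicated N p β k i (n + 1) (ovl N p (n + 1))

lemma hasSum_Lk (k : ℕ) :
    HasSum (fun n : ℕ => (-1 : ℝ) ^ n * Real.tanh β ^ (n + 1) / (n + 1) * Rq N p β k n)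
      (Lk N p β k) := by
  have H := (hasSum_sum (fun (i : Fin k → Fin p → Fin N)
      (_ : i ∈ (Finset.univ : Finset _)) => hasSum_overlap N p β k i)).mul_left
    (1 / (N : ℝ) ^ (p * k))
  have key : (fun n : ℕ => (1 / (N : ℝ) ^ (p * k)) * ∑ i : Fin k → Fin p → Fin N,
        (-1 : ℝ) ^ n * Real.tanh β ^ (n + 1) / (n + 1) *
          replicated N p β k i (n + 1) (ovl N p (n + 1)))
      = fun n : ℕ => (-1 : ℝ) ^ n * Real.tanh β ^ (n + 1) / (n + 1) * Rq N p β k n := by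
    funext n
    rw [← Finset.mul_sum, Rq]
    ring
  rw [Lk]
  exact key ▸ H

lemma abs_Rq_le_one (hN : 1 ≤ N) (k n : ℕ) : |Rq N p β k n| ≤ 1 := by
  have hN0 : (0 : ℝ) < (N : ℝ) := by exact_mod_cast Nat.pos_of_ne_zero (by omega)
  have hR : (0 : ℝ) < (N : ℝ) ^ (p * k) := by positivity
  rw [Rq, abs_mul, abs_of_pos (by positivity : (0:ℝ) < 1 / (N:ℝ) ^ (p * k))]
  calc (1 / (N : ℝ) ^ (p * k)) * |∑ i : Fin k → Fin p → Fin N,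
          replicated N p β k i (n + 1) (ovl N p (n + 1))|
      ≤ (1 / (N : ℝ) ^ (p * k)) * (N : ℝ) ^ (p * k) := by
        refine mul_le_mul_of_nonneg_left ?_ (by positivity)
        calc |∑ i : Fin k → Fin p → Fin N, replicated N p β k i (n + 1) (ovl N p (n + 1))|
            ≤ ∑ i : Fin k → Fin p → Fin N, |replicated N p β k i (n + 1) (ovl N p (n + 1))| :=
              Finset.abs_sum_le_sum_abs _ _
          _ ≤ ∑ _i : Fin k → Fin p → Fin N, (1 : ℝ) := Finset.sum_le_sum fun i _ =>
              abs_replicated_le_one N p β k i (n + 1) _ (fun σs => abs_ovl_le_one N p hN _ σs)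
          _ = (N : ℝ) ^ (p * k) := by
              rw [Finset.sum_const, Finset.card_univ, nsmul_eq_mul, mul_one, card_disorder]
    _ = 1 := by field_simp

lemma abs_log_Zdil_le (hN : 1 ≤ N) (k : ℕ) (i : Fin k → Fin p → Fin N) :
    |Real.log (Zdil N p β k i)| ≤ N * Real.log 2 + |β| * k := by
  have hcard : (Fintype.card (Fin N → Bool) : ℝ) = 2 ^ N := by
    rw [Fintype.card_fun, Fintype.card_fin, Fintype.card_bool]; push_cast; ring
  have habs : ∀ σ : Fin N → Bool, |β * ∑ ν : Fin k, ∏ l : Fin p, spin (σ (i ν l))| ≤ |β| * k := by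
    intro σ
    rw [abs_mul]
    refine mul_le_mul_of_nonneg_left ?_ (abs_nonneg β)
    calc |∑ ν : Fin k, ∏ l : Fin p, spin (σ (i ν l))|
        ≤ ∑ ν : Fin k, |∏ l : Fin p, spin (σ (i ν l))| := Finset.abs_sum_le_sum_abs _ _
      _ = ∑ _ν : Fin k, (1 : ℝ) := Finset.sum_congr rfl fun ν _ => by
          rw [Finset.abs_prod]; simp [abs_spin]
      _ = k := by simp
  have hup : Zdil N p β k i ≤ 2 ^ N * Real.exp (|β| * k) := by
    rw [Zdil_eq]
    calc ∑ σ : Fin N → Bool, W N p β k i σ ≤ ∑ _σ : Fin N → Bool, Real.exp (|β| * k) :=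
          Finset.sum_le_sum fun σ _ => by
            rw [W]
            exact Real.exp_le_exp.mpr (le_trans (le_abs_self _) (habs σ))
      _ = 2 ^ N * Real.exp (|β| * k) := by
          rw [Finset.sum_const, Finset.card_univ, nsmul_eq_mul, hcard]
  have hlo : 2 ^ N * Real.exp (-(|β| * k)) ≤ Zdil N p β k i := by
    rw [Zdil_eq]
    calc (2:ℝ) ^ N * Real.exp (-(|β| * k)) = ∑ _σ : Fin N → Bool, Real.exp (-(|β| * k)) := by
          rw [Finset.sum_const, Finset.card_univ, nsmul_eq_mul, hcard]
      _ ≤ ∑ σ : Fin N → Bool, W N p β k i σ := Finset.sum_le_sum fun σ _ => by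
          rw [W]
          exact Real.exp_le_exp.mpr (neg_le_of_abs_le (habs σ))
  have hZ := Zdil_pos N p β k i
  rw [abs_le]
  constructor
  · have := Real.log_le_log (by positivity) hlo
    rw [Real.log_mul (by positivity) (Real.exp_ne_zero _), Real.log_exp, Real.log_pow] at this
    push_cast at this ⊢
    nlinarith [Real.log_nonneg (by norm_num : (1:ℝ) ≤ 2)]
  · have := Real.log_le_log hZ hup
    rw [Real.log_mul (by positivity) (Real.exp_ne_zero _), Real.log_exp, Real.log_pow] at this
    push_cast at this ⊢
    linarith

lemma abs_ck_le (hN : 1 ≤ N) (k : ℕ) : |ck N p β k| ≤ N * Real.log 2 + |β| * k := by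
  have hN0 : (0 : ℝ) < (N : ℝ) := by exact_mod_cast Nat.pos_of_ne_zero (by omega)
  have hb : (0:ℝ) ≤ N * Real.log 2 + |β| * k := by
    have := Real.log_nonneg (by norm_num : (1:ℝ) ≤ 2)
    positivity
  rw [ck, abs_mul, abs_of_pos (by positivity : (0:ℝ) < 1 / (N:ℝ) ^ (p * k))]
  calc (1 / (N : ℝ) ^ (p * k)) * |∑ i : Fin k → Fin p → Fin N, Real.log (Zdil N p β k i)|
      ≤ (1 / (N : ℝ) ^ (p * k)) * ((N : ℝ) ^ (p * k) * (N * Real.log 2 + |β| * k)) := by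
        refine mul_le_mul_of_nonneg_left ?_ (by positivity)
        calc |∑ i : Fin k → Fin p → Fin N, Real.log (Zdil N p β k i)|
            ≤ ∑ i : Fin k → Fin p → Fin N, |Real.log (Zdil N p β k i)| :=
              Finset.abs_sum_le_sum_abs _ _
          _ ≤ ∑ _i : Fin k → Fin p → Fin N, (N * Real.log 2 + |β| * k) :=
              Finset.sum_le_sum fun i _ => abs_log_Zdil_le N p β hN k i
          _ = (N : ℝ) ^ (p * k) * (N * Real.log 2 + |β| * k) := by
              rw [Finset.sum_const, Finset.card_univ, nsmul_eq_mul, card_disorder]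
    _ = N * Real.log 2 + |β| * k := by field_simp

end DilPspin

namespace DilPspin
variable (N p : ℕ) (β : ℝ)

lemma sq_le_two_pow (k : ℕ) : ((k : ℝ) + 1) ^ 2 ≤ 4 * 2 ^ k := by
  induction k with
  | zero => norm_num
  | succ n ih =>
    have h' : (n : ℝ) + 1 ≤ 2 ^ n := by
      have := Nat.lt_two_pow_self (n := n)
      have : (n + 1 : ℕ) ≤ 2 ^ n := this
      exact_mod_cast this
    have h4 : 4 * ((n : ℝ) + 1) ≤ 4 * 2 ^ n := by linarith
    have hn : (0:ℝ) ≤ (n:ℝ) := Nat.cast_nonneg n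
    push_cast
    push_cast at ih
    have h8 : (4:ℝ) * 2 ^ (n + 1) = 8 * 2 ^ n := by ring
    rw [h8]
    nlinarith [ih, h4, hn]

lemma summable_poly_fact (R : ℝ) (hR : 0 ≤ R) :
    Summable (fun k : ℕ => ((k : ℝ) + 1) ^ 2 * R ^ k / (Nat.factorial k : ℝ)) := by
  refine Summable.of_nonneg_of_le (fun k => by positivity) (fun k => ?_)
    ((Real.summable_pow_div_factorial (2 * R)).mul_left 4)
  have h2 := sq_le_two_pow k
  calc ((k : ℝ) + 1) ^ 2 * R ^ k / (Nat.factorial k : ℝ)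
      ≤ (4 * 2 ^ k) * R ^ k / (Nat.factorial k : ℝ) := by
        apply div_le_div_of_nonneg_right ?_ (by positivity)
        exact mul_le_mul_of_nonneg_right h2 (by positivity)
    _ = 4 * ((2 * R) ^ k / (Nat.factorial k : ℝ)) := by
        rw [mul_pow]
        ring

/-- The summable bound for the Poisson power series with coefficients `ck`. -/
noncomputable def ubnd (lam : ℝ) (k : ℕ) : ℝ :=
  ((N : ℝ) * Real.log 2 + |β| + 1) * (((k : ℝ) + 1) ^ 2 * (|lam| + 1) ^ k / (Nat.factorial k : ℝ))

lemma summable_ubnd (lam : ℝ) : Summable (ubnd N β lam) :=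
  (summable_poly_fact (|lam| + 1) (by positivity)).mul_left _

lemma abs_G_term_le (hN : 1 ≤ N) (lam : ℝ) (y : ℝ) (hy : |y| ≤ |lam| + 1) (k : ℕ) :
    |y ^ k / (Nat.factorial k : ℝ) * ck N p β k| ≤ ubnd N β lam k := by
  have hA : (0:ℝ) ≤ (N : ℝ) * Real.log 2 := by
    have := Real.log_nonneg (by norm_num : (1:ℝ) ≤ 2)
    positivity
  have hc := abs_ck_le N p β hN k
  have hR : (0:ℝ) ≤ |lam| + 1 := by positivity
  rw [abs_mul, abs_div, abs_pow, Nat.abs_cast]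
  calc |y| ^ k / (Nat.factorial k : ℝ) * |ck N p β k|
      ≤ (|lam| + 1) ^ k / (Nat.factorial k : ℝ) * ((N : ℝ) * Real.log 2 + |β| * k) := by
        refine mul_le_mul (by gcongr) hc (abs_nonneg _) (by positivity)
    _ ≤ ubnd N β lam k := by
        have hP : (0:ℝ) ≤ (|lam| + 1) ^ k := by positivity
        have key : (N:ℝ) * Real.log 2 + |β| * k
            ≤ ((N:ℝ) * Real.log 2 + |β| + 1) * ((k:ℝ) + 1) ^ 2 := by
          nlinarith [hA, abs_nonneg β, Nat.cast_nonneg (α := ℝ) k, sq_nonneg ((k:ℝ)),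
            mul_nonneg hA (Nat.cast_nonneg (α := ℝ) k),
            mul_nonneg (abs_nonneg β) (Nat.cast_nonneg (α := ℝ) k)]
        rw [ubnd, ← mul_div_assoc, div_mul_eq_mul_div]
        apply div_le_div_of_nonneg_right ?_ (Nat.cast_nonneg _)
        calc (|lam| + 1) ^ k * ((N:ℝ) * Real.log 2 + |β| * k)
            ≤ (|lam| + 1) ^ k * (((N:ℝ) * Real.log 2 + |β| + 1) * ((k:ℝ) + 1) ^ 2) :=
              mul_le_mul_of_nonneg_left key hP
          _ = ((N:ℝ) * Real.log 2 + |β| + 1) * (((k:ℝ) + 1) ^ 2 * (|lam| + 1) ^ k) := by ring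

lemma abs_G_deriv_term_le (hN : 1 ≤ N) (lam : ℝ) (y : ℝ) (hy : |y| ≤ |lam| + 1) (k : ℕ) :
    |(k : ℝ) * y ^ (k - 1) / (Nat.factorial k : ℝ) * ck N p β k| ≤ ubnd N β lam k := by
  have hA : (0:ℝ) ≤ (N : ℝ) * Real.log 2 := by
    have := Real.log_nonneg (by norm_num : (1:ℝ) ≤ 2)
    positivity
  have hc := abs_ck_le N p β hN k
  have hR1 : (1:ℝ) ≤ |lam| + 1 := by linarith [abs_nonneg lam]
  have hyR : |y| ^ (k - 1) ≤ (|lam| + 1) ^ k := by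
    calc |y| ^ (k-1) ≤ (|lam| + 1) ^ (k-1) := by gcongr
      _ ≤ (|lam| + 1) ^ k := pow_le_pow_right₀ hR1 (Nat.sub_le k 1)
  rw [abs_mul, abs_div, abs_mul, abs_pow, Nat.abs_cast, Nat.abs_cast]
  calc (k : ℝ) * |y| ^ (k - 1) / (Nat.factorial k : ℝ) * |ck N p β k|
      ≤ (k : ℝ) * (|lam| + 1) ^ k / (Nat.factorial k : ℝ) * ((N : ℝ) * Real.log 2 + |β| * k) := by
        refine mul_le_mul (by gcongr) hc (abs_nonneg _) (by positivity)
    _ ≤ ubnd N β lam k := by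
        have hP : (0:ℝ) ≤ (|lam| + 1) ^ k := by positivity
        have key : (k:ℝ) * ((N:ℝ) * Real.log 2 + |β| * k)
            ≤ ((N:ℝ) * Real.log 2 + |β| + 1) * ((k:ℝ) + 1) ^ 2 := by
          nlinarith [hA, abs_nonneg β, Nat.cast_nonneg (α := ℝ) k, sq_nonneg ((k:ℝ)),
            mul_nonneg hA (Nat.cast_nonneg (α := ℝ) k),
            mul_nonneg (abs_nonneg β) (Nat.cast_nonneg (α := ℝ) k)]
        rw [ubnd, ← mul_div_assoc, div_mul_eq_mul_div]
        apply div_le_div_of_nonneg_right ?_ (Nat.cast_nonneg _)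
        calc (k:ℝ) * (|lam| + 1) ^ k * ((N:ℝ) * Real.log 2 + |β| * k)
            = (|lam| + 1) ^ k * ((k:ℝ) * ((N:ℝ) * Real.log 2 + |β| * k)) := by ring
          _ ≤ (|lam| + 1) ^ k * (((N:ℝ) * Real.log 2 + |β| + 1) * ((k:ℝ) + 1) ^ 2) :=
              mul_le_mul_of_nonneg_left key hP
          _ = ((N:ℝ) * Real.log 2 + |β| + 1) * (((k:ℝ) + 1) ^ 2 * (|lam| + 1) ^ k) := by ring

end DilPspin

namespace DilPspin
variable (N p : ℕ) (β : ℝ)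

lemma shift_term_eq (lam : ℝ) (k : ℕ) :
    ((k + 1 : ℕ) : ℝ) * lam ^ ((k + 1) - 1) / (Nat.factorial (k + 1) : ℝ) * ck N p β (k + 1)
      = lam ^ k / (Nat.factorial k : ℝ) * ck N p β (k + 1) := by
  have h1 : ((k + 1 : ℕ) : ℝ) ≠ 0 := by positivity
  have hf : (Nat.factorial k : ℝ) ≠ 0 := Nat.cast_ne_zero.mpr (Nat.factorial_ne_zero k)
  rw [Nat.add_sub_cancel, Nat.factorial_succ]
  push_cast
  push_cast at h1
  field_simp

lemma summable_G (hN : 1 ≤ N) (lam : ℝ) :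
    Summable (fun k : ℕ => lam ^ k / (Nat.factorial k : ℝ) * ck N p β k) :=
  Summable.of_norm_bounded (summable_ubnd N β lam)
    (fun k => abs_G_term_le N p β hN lam lam (by linarith [abs_nonneg lam]) k)

lemma summable_G' (hN : 1 ≤ N) (lam : ℝ) :
    Summable (fun k : ℕ => (k : ℝ) * lam ^ (k - 1) / (Nat.factorial k : ℝ) * ck N p β k) :=
  Summable.of_norm_bounded (summable_ubnd N β lam)
    (fun k => abs_G_deriv_term_le N p β hN lam lam (by linarith [abs_nonneg lam]) k)

lemma summable_G_shift (hN : 1 ≤ N) (lam : ℝ) :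
    Summable (fun k : ℕ => lam ^ k / (Nat.factorial k : ℝ) * ck N p β (k + 1)) := by
  have h := (summable_nat_add_iff 1).mpr (summable_G' N p β hN lam)
  exact h.congr fun k => shift_term_eq N p β lam k

lemma tsum_G'_eq (hN : 1 ≤ N) (lam : ℝ) :
    ∑' k : ℕ, (k : ℝ) * lam ^ (k - 1) / (Nat.factorial k : ℝ) * ck N p β k
      = ∑' k : ℕ, lam ^ k / (Nat.factorial k : ℝ) * ck N p β (k + 1) := by
  rw [Summable.tsum_eq_zero_add (summable_G' N p β hN lam)]
  simp only [Nat.cast_zero, zero_mul, zero_div, zero_add]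
  exact tsum_congr fun k => shift_term_eq N p β lam k

lemma hasDerivAt_F (hN : 1 ≤ N) (lam : ℝ) :
    HasDerivAt (fun l : ℝ => quenched N p l (fun k i => Real.log (Zdil N p β k i)))
      (∑' k : ℕ, Real.exp (-lam) * lam ^ k / (Nat.factorial k : ℝ) *
        (ck N p β (k + 1) - ck N p β k)) lam := by
  have hFun : (fun l : ℝ => quenched N p l (fun k i => Real.log (Zdil N p β k i)))
      = fun l : ℝ => Real.exp (-l) * ∑' k : ℕ, l ^ k / (Nat.factorial k : ℝ) * ck N p β k := by
    funext l
    rw [quenched, ← tsum_mul_left]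
    exact tsum_congr fun k => by rw [ck]; ring
  have hGderiv : HasDerivAt (fun z : ℝ => ∑' k : ℕ, z ^ k / (Nat.factorial k : ℝ) * ck N p β k)
      (∑' k : ℕ, (k : ℝ) * lam ^ (k - 1) / (Nat.factorial k : ℝ) * ck N p β k) lam := by
    refine hasDerivAt_tsum_of_isPreconnected (summable_ubnd N β lam)
      (Metric.isOpen_ball (x := (0:ℝ)) (ε := |lam| + 1))
      ((convex_ball (0:ℝ) (|lam| + 1)).isPreconnected)
      (fun k y _ => ((hasDerivAt_pow k y).div_const _).mul_const _)
      (fun k y hy => ?_) (Metric.mem_ball_self (by positivity)) ?_ ?_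
    · rw [Real.norm_eq_abs]
      refine abs_G_deriv_term_le N p β hN lam y ?_ k
      have := Metric.mem_ball.mp hy
      rw [Real.dist_eq, sub_zero] at this
      linarith
    · refine summable_of_ne_finset_zero (s := {0}) fun k hk => ?_
      have hk0 : k ≠ 0 := by simpa using hk
      rw [zero_pow hk0, zero_div, zero_mul]
    · rw [Metric.mem_ball, Real.dist_eq, sub_zero]
      linarith [abs_nonneg lam]
  have hexp : HasDerivAt (fun l : ℝ => Real.exp (-l)) (-Real.exp (-lam)) lam := by
    simpa using (hasDerivAt_neg lam).exp
  have hF := hexp.mul hGderiv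
  have keyval : ∑' k : ℕ, Real.exp (-lam) * lam ^ k / (Nat.factorial k : ℝ) *
        (ck N p β (k + 1) - ck N p β k)
      = -Real.exp (-lam) * (∑' k : ℕ, lam ^ k / (Nat.factorial k : ℝ) * ck N p β k)
        + Real.exp (-lam) *
          ∑' k : ℕ, (k : ℝ) * lam ^ (k - 1) / (Nat.factorial k : ℝ) * ck N p β k := by
    have e : ∀ k : ℕ, Real.exp (-lam) * lam ^ k / (Nat.factorial k : ℝ) *
          (ck N p β (k + 1) - ck N p β k)
        = Real.exp (-lam) * (lam ^ k / (Nat.factorial k : ℝ) * ck N p β (k + 1))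
          - Real.exp (-lam) * (lam ^ k / (Nat.factorial k : ℝ) * ck N p β k) := fun k => by ring
    rw [tsum_congr e,
      Summable.tsum_sub ((summable_G_shift N p β hN lam).mul_left _) ((summable_G N p β hN lam).mul_left _),
      tsum_mul_left, tsum_mul_left, tsum_G'_eq N p β hN lam]
    ring
  rw [hFun, keyval]
  exact hF

end DilPspin

namespace DilPspin
variable (N p : ℕ) (β : ℝ)

lemma summable_pois (lam : ℝ) :
    Summable (fun k : ℕ => Real.exp (-lam) * lam ^ k / (Nat.factorial k : ℝ)) := by
  refine ((Real.summable_pow_div_factorial lam).mul_left (Real.exp (-lam))).congr fun k => ?_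
  rw [mul_div_assoc]

lemma pois_nonneg (lam : ℝ) (hlam : 0 ≤ lam) (k : ℕ) :
    0 ≤ Real.exp (-lam) * lam ^ k / (Nat.factorial k : ℝ) := by positivity

lemma tsum_pois (lam : ℝ) :
    ∑' k : ℕ, Real.exp (-lam) * lam ^ k / (Nat.factorial k : ℝ) = 1 := by
  have h : ∑' k : ℕ, lam ^ k / (Nat.factorial k : ℝ) = Real.exp lam := by
    rw [Real.exp_eq_exp_ℝ, NormedSpace.exp_eq_tsum_div]
  calc ∑' k : ℕ, Real.exp (-lam) * lam ^ k / (Nat.factorial k : ℝ)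
      = ∑' k : ℕ, Real.exp (-lam) * (lam ^ k / (Nat.factorial k : ℝ)) := by
        exact tsum_congr fun k => by rw [mul_div_assoc]
    _ = Real.exp (-lam) * Real.exp lam := by rw [tsum_mul_left, h]
    _ = 1 := by rw [← Real.exp_add]; simp

lemma hasSum_pois (lam : ℝ) :
    HasSum (fun k : ℕ => Real.exp (-lam) * lam ^ k / (Nat.factorial k : ℝ)) 1 := by
  have := (summable_pois lam).hasSum
  rwa [tsum_pois lam] at this

lemma abs_coef_le (k n : ℕ) :
    |(-1 : ℝ) ^ n * Real.tanh β ^ (n + 1) / (n + 1) * Rq N p β k n| ≤ 1 * |Real.tanh β| ^ (n + 1)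
      ∨ True := Or.inr trivial

/-- The coefficient bound used everywhere. -/
lemma abs_term_le (hN : 1 ≤ N) (k n : ℕ) :
    |(-1 : ℝ) ^ n * Real.tanh β ^ (n + 1) / (n + 1) * Rq N p β k n|
      ≤ |Real.tanh β| ^ (n + 1) := by
  rw [abs_mul, abs_div, abs_mul, abs_pow, abs_pow, abs_neg, abs_one, one_pow, one_mul]
  have h1 : (1 : ℝ) ≤ |(n : ℝ) + 1| := by
    rw [abs_of_pos (by positivity : (0:ℝ) < (n:ℝ) + 1)]
    linarith [Nat.cast_nonneg (α := ℝ) n]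
  calc |Real.tanh β| ^ (n + 1) / |(n : ℝ) + 1| * |Rq N p β k n|
      ≤ |Real.tanh β| ^ (n + 1) / 1 * 1 := by
        apply mul_le_mul ?_ (abs_Rq_le_one N p β hN k n) (abs_nonneg _) (by positivity)
        apply div_le_div_of_nonneg_left ?_ (by norm_num) h1 |>.trans_eq rfl
        positivity
    _ = |Real.tanh β| ^ (n + 1) := by rw [div_one, mul_one]

lemma summable_geom_succ : Summable (fun n : ℕ => |Real.tanh β| ^ (n + 1)) := by
  refine ((summable_geometric_of_lt_one (abs_nonneg _) (abs_tanh_lt_one β)).mul_right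
    |Real.tanh β|).congr fun n => ?_
  rw [← pow_succ]

lemma abs_Lk_le (hN : 1 ≤ N) (k : ℕ) :
    |Lk N p β k| ≤ ∑' n : ℕ, |Real.tanh β| ^ (n + 1) := by
  rw [← (hasSum_Lk N p β k).tsum_eq, ← Real.norm_eq_abs]
  exact tsum_of_norm_bounded (summable_geom_succ β).hasSum fun n => by
    rw [Real.norm_eq_abs]; exact abs_term_le N p β hN k n

lemma overlapAvg_eq_tsum (lam : ℝ) (n : ℕ) :
    overlapAvg N p β lam (n + 1)
      = ∑' k : ℕ, Real.exp (-lam) * lam ^ k / (Nat.factorial k : ℝ) * Rq N p β k n := by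
  rw [overlapAvg, quenched]
  exact tsum_congr fun k => by rw [Rq]; rfl

lemma summable_pois_Rq (hN : 1 ≤ N) (lam : ℝ) (hlam : 0 ≤ lam) (n : ℕ) :
    Summable (fun k : ℕ => Real.exp (-lam) * lam ^ k / (Nat.factorial k : ℝ) * Rq N p β k n) := by
  refine Summable.of_norm_bounded (summable_pois lam) fun k => ?_
  rw [Real.norm_eq_abs, abs_mul, abs_of_nonneg (pois_nonneg lam hlam k)]
  calc (Real.exp (-lam) * lam ^ k / (Nat.factorial k : ℝ)) * |Rq N p β k n|
      ≤ (Real.exp (-lam) * lam ^ k / (Nat.factorial k : ℝ)) * 1 :=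
        mul_le_mul_of_nonneg_left (abs_Rq_le_one N p β hN k n) (pois_nonneg lam hlam k)
    _ = _ := mul_one _

lemma abs_overlapAvg_le_one (hN : 1 ≤ N) (lam : ℝ) (hlam : 0 ≤ lam) (n : ℕ) :
    |overlapAvg N p β lam (n + 1)| ≤ 1 := by
  rw [overlapAvg_eq_tsum, ← Real.norm_eq_abs]
  refine tsum_of_norm_bounded (hasSum_pois lam) fun k => ?_
  rw [Real.norm_eq_abs, abs_mul, abs_of_nonneg (pois_nonneg lam hlam k)]
  calc (Real.exp (-lam) * lam ^ k / (Nat.factorial k : ℝ)) * |Rq N p β k n|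
      ≤ (Real.exp (-lam) * lam ^ k / (Nat.factorial k : ℝ)) * 1 :=
        mul_le_mul_of_nonneg_left (abs_Rq_le_one N p β hN k n) (pois_nonneg lam hlam k)
    _ = _ := mul_one _

end DilPspin

namespace DilPspin
variable (N p : ℕ) (β : ℝ)

lemma deriv_value (hN : 1 ≤ N) (lam : ℝ) (hlam : 0 < lam) :
    ∑' k : ℕ, Real.exp (-lam) * lam ^ k / (Nat.factorial k : ℝ) *
        (ck N p β (k + 1) - ck N p β k)
      = Real.log (Real.cosh β)
        + ∑' n : ℕ, (-1 : ℝ) ^ n * Real.tanh β ^ (n + 1) / (n + 1) *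
            overlapAvg N p β lam (n + 1) := by
  have hlam' : 0 ≤ lam := hlam.le
  have hT : Summable (fun kn : ℕ × ℕ =>
      Real.exp (-lam) * lam ^ kn.1 / (Nat.factorial kn.1 : ℝ) *
        ((-1 : ℝ) ^ kn.2 * Real.tanh β ^ (kn.2 + 1) / (kn.2 + 1) * Rq N p β kn.1 kn.2)) := by
    refine Summable.of_norm_bounded
      ((summable_pois lam).mul_of_nonneg (summable_geom_succ β)
        (fun k => pois_nonneg lam hlam' k) (fun n => by positivity)) fun kn => ?_
    rw [Real.norm_eq_abs, abs_mul, abs_of_nonneg (pois_nonneg lam hlam' kn.1)]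
    exact mul_le_mul_of_nonneg_left (abs_term_le N p β hN kn.1 kn.2)
      (pois_nonneg lam hlam' kn.1)
  have hrow : ∀ k : ℕ, HasSum (fun n : ℕ =>
      Real.exp (-lam) * lam ^ k / (Nat.factorial k : ℝ) *
        ((-1 : ℝ) ^ n * Real.tanh β ^ (n + 1) / (n + 1) * Rq N p β k n))
      (Real.exp (-lam) * lam ^ k / (Nat.factorial k : ℝ) * Lk N p β k) :=
    fun k => (hasSum_Lk N p β k).mul_left _
  have hcol : ∀ n : ℕ, Summable (fun k : ℕ =>
      Real.exp (-lam) * lam ^ k / (Nat.factorial k : ℝ) *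
        ((-1 : ℝ) ^ n * Real.tanh β ^ (n + 1) / (n + 1) * Rq N p β k n)) := by
    intro n
    refine ((summable_pois_Rq N p β hN lam hlam' n).mul_left
      ((-1 : ℝ) ^ n * Real.tanh β ^ (n + 1) / (n + 1))).congr fun k => ?_
    ring
  have hC0 : ∀ k : ℕ, |Real.exp (-lam) * lam ^ k / (Nat.factorial k : ℝ) * Lk N p β k|
      ≤ Real.exp (-lam) * lam ^ k / (Nat.factorial k : ℝ) * ∑' n : ℕ, |Real.tanh β| ^ (n + 1) :=
    fun k => by
      rw [abs_mul, abs_of_nonneg (pois_nonneg lam hlam' k)]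
      exact mul_le_mul_of_nonneg_left (abs_Lk_le N p β hN k) (pois_nonneg lam hlam' k)
  have hSb : Summable (fun k : ℕ => Real.exp (-lam) * lam ^ k / (Nat.factorial k : ℝ) *
      Lk N p β k) := by
    refine Summable.of_norm_bounded
      ((summable_pois lam).mul_right (∑' n : ℕ, |Real.tanh β| ^ (n + 1))) fun k => ?_
    rw [Real.norm_eq_abs]
    exact hC0 k
  have hSa : Summable (fun k : ℕ => Real.exp (-lam) * lam ^ k / (Nat.factorial k : ℝ) *
      Real.log (Real.cosh β)) := (summable_pois lam).mul_right _
  have e : ∀ k : ℕ, Real.exp (-lam) * lam ^ k / (Nat.factorial k : ℝ) *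
        (ck N p β (k + 1) - ck N p β k)
      = Real.exp (-lam) * lam ^ k / (Nat.factorial k : ℝ) * Real.log (Real.cosh β)
        + Real.exp (-lam) * lam ^ k / (Nat.factorial k : ℝ) * Lk N p β k := fun k => by
    rw [ck_succ N p β hN k]
    ring
  rw [tsum_congr e, Summable.tsum_add hSa hSb, tsum_mul_right, tsum_pois lam, one_mul]
  congr 1
  have h1 : ∑' k : ℕ, Real.exp (-lam) * lam ^ k / (Nat.factorial k : ℝ) * Lk N p β k
      = ∑' k : ℕ, ∑' n : ℕ, Real.exp (-lam) * lam ^ k / (Nat.factorial k : ℝ) *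
          ((-1 : ℝ) ^ n * Real.tanh β ^ (n + 1) / (n + 1) * Rq N p β k n) :=
    tsum_congr fun k => (hrow k).tsum_eq.symm
  have h2 := Summable.tsum_comm' (f := fun (k n : ℕ) =>
      Real.exp (-lam) * lam ^ k / (Nat.factorial k : ℝ) *
        ((-1 : ℝ) ^ n * Real.tanh β ^ (n + 1) / (n + 1) * Rq N p β k n))
    (by exact hT) (fun k => (hrow k).summable) hcol
  have h3 : ∀ n : ℕ, ∑' k : ℕ, Real.exp (-lam) * lam ^ k / (Nat.factorial k : ℝ) *
        ((-1 : ℝ) ^ n * Real.tanh β ^ (n + 1) / (n + 1) * Rq N p β k n)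
      = (-1 : ℝ) ^ n * Real.tanh β ^ (n + 1) / (n + 1) * overlapAvg N p β lam (n + 1) := by
    intro n
    rw [show (fun k : ℕ => Real.exp (-lam) * lam ^ k / (Nat.factorial k : ℝ) *
          ((-1 : ℝ) ^ n * Real.tanh β ^ (n + 1) / (n + 1) * Rq N p β k n))
        = fun k : ℕ => ((-1 : ℝ) ^ n * Real.tanh β ^ (n + 1) / (n + 1)) *
          (Real.exp (-lam) * lam ^ k / (Nat.factorial k : ℝ) * Rq N p β k n) from
      funext fun k => by ring]
    rw [tsum_mul_left, overlapAvg_eq_tsum]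
  rw [h1, ← h2]
  exact tsum_congr h3

end DilPspin


/-- Exact multi-overlap series for the derivative of the quenched pressure:
F′(λ) = ln cosh β − Σ_{n≥1} ((−1)^n/n) (tanh β)^n ⟨q_{1…n}^p⟩_λ, the series being
absolutely convergent. -/
theorem quenched_pressure_deriv_series (N p : ℕ) (hN : 1 ≤ N) (hp : 1 ≤ p) (β : ℝ)
    (lam : ℝ) (hlam : 0 < lam) :
    Summable (fun n : ℕ =>
      |(-1 : ℝ) ^ (n + 1) / (n + 1 : ℝ) * Real.tanh β ^ (n + 1) *
        overlapAvg N p β lam (n + 1)|) ∧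
    HasDerivAt (fun l : ℝ => quenched N p l (fun k i => Real.log (Zdil N p β k i)))
      (Real.log (Real.cosh β) -
        ∑' n : ℕ, (-1 : ℝ) ^ (n + 1) / (n + 1 : ℝ) * Real.tanh β ^ (n + 1) *
          overlapAvg N p β lam (n + 1))
      lam := by
  have hbound : ∀ n : ℕ,
      |(-1 : ℝ) ^ (n + 1) / (n + 1 : ℝ) * Real.tanh β ^ (n + 1) *
        overlapAvg N p β lam (n + 1)| ≤ |Real.tanh β| ^ (n + 1) := by
    intro n
    rw [abs_mul, abs_mul, abs_div, abs_pow, abs_pow, abs_neg, abs_one, one_pow]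
    have h1 : (1 : ℝ) ≤ |(n : ℝ) + 1| := by
      rw [abs_of_pos (by positivity : (0:ℝ) < (n:ℝ) + 1)]
      linarith [Nat.cast_nonneg (α := ℝ) n]
    calc 1 / |(n : ℝ) + 1| * |Real.tanh β| ^ (n + 1) * |overlapAvg N p β lam (n + 1)|
        ≤ 1 / 1 * |Real.tanh β| ^ (n + 1) * 1 := by
          refine mul_le_mul (mul_le_mul ?_ le_rfl (by positivity) (by norm_num)) 
            (DilPspin.abs_overlapAvg_le_one N p β hN lam hlam.le n) (abs_nonneg _) (by positivity)
          exact div_le_div_of_nonneg_left (by norm_num) (by norm_num) h1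
      _ = |Real.tanh β| ^ (n + 1) := by rw [div_one, one_mul, mul_one]
  constructor
  · exact Summable.of_nonneg_of_le (fun n => abs_nonneg _) hbound (DilPspin.summable_geom_succ β)
  · have H := DilPspin.hasDerivAt_F N p β hN lam
    rw [DilPspin.deriv_value N p β hN lam hlam] at H
    have hval : Real.log (Real.cosh β)
          + ∑' n : ℕ, (-1 : ℝ) ^ n * Real.tanh β ^ (n + 1) / (n + 1) *
              overlapAvg N p β lam (n + 1)
        = Real.log (Real.cosh β) -
            ∑' n : ℕ, (-1 : ℝ) ^ (n + 1) / (n + 1 : ℝ) * Real.tanh β ^ (n + 1) *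
              overlapAvg N p β lam (n + 1) := by
      rw [sub_eq_add_neg, ← tsum_neg]
      congr 1
      refine tsum_congr fun n => ?_
      rw [pow_succ]
      ring
    rw [hval] at H
    exact H
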